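/- If a decomposition of a CRN into subnetworks N_1, ..., N_p is incidence independent, i.e. n − ℓ = Σ_i (n_i − ℓ_i), then the deficiency satisfies δ ≥ δ_1 + δ_2 + ... + δ_p. -/

import Mathlib

lemma range_sum_le' {ι V W : Type*} [AddCommGroup V] [Module ℝ V] [AddCommGroup W]
    [Module ℝ W] (s : Finset ι) (f : ι → (V →ₗ[ℝ] W)) :
    LinearMap.range (∑ i ∈ s, f i) ≤ ⨆ i ∈ s, LinearMap.range (f i) := by
  rintro _ ⟨x, rfl⟩
  simp only [LinearMap.coe_sum, Finset.sum_apply]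
  exact Submodule.sum_mem _ fun i hi =>
    Submodule.mem_iSup_of_mem i (Submodule.mem_iSup_of_mem hi ⟨x, rfl⟩)

lemma finrank_range_sum_le {ι V W : Type*} [AddCommGroup V] [Module ℝ V] [AddCommGroup W]
    [Module ℝ W] [FiniteDimensional ℝ W] (s : Finset ι) (f : ι → (V →ₗ[ℝ] W)) :
    Module.finrank ℝ (LinearMap.range (∑ i ∈ s, f i))
      ≤ ∑ i ∈ s, Module.finrank ℝ (LinearMap.range (f i)) := by
  classical
  induction s using Finset.induction with
  | empty => simp; exact Submodule.finrank_eq_zero.mpr (LinearMap.range_eq_bot.mpr rfl)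
  | @insert a s ha ih =>
    rw [Finset.sum_insert ha, Finset.sum_insert ha]
    have h1 : LinearMap.range (f a + ∑ i ∈ s, f i)
        ≤ LinearMap.range (f a) ⊔ LinearMap.range (∑ i ∈ s, f i) := by
      rintro _ ⟨x, rfl⟩
      exact Submodule.add_mem_sup ⟨x, rfl⟩ ⟨x, rfl⟩
    calc Module.finrank ℝ (LinearMap.range (f a + ∑ i ∈ s, f i))
        ≤ Module.finrank ℝ ((LinearMap.range (f a) ⊔ LinearMap.range (∑ i ∈ s, f i) : Submodule ℝ W)) :=
          Submodule.finrank_mono h1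
      _ ≤ Module.finrank ℝ (LinearMap.range (f a))
            + Module.finrank ℝ (LinearMap.range (∑ i ∈ s, f i)) :=
          Submodule.finrank_add_le_finrank_add_finrank _ _
      _ ≤ _ := Nat.add_le_add_left ih _

/-- If a decomposition of a CRN is incidence independent (`n - ℓ = Σ (n_i - ℓ_i)`, i.e.
`rank I_a = Σ rank I_{a,i}`), then `δ ≥ δ_1 + ⋯ + δ_p`, where the deficiency is expressed
as `δ = rank I_a - rank N` (using `n - ℓ = rank I_a` and `s = rank N`). -/
theorem stmt_5 {m n r p : ℕ}
    (Ia : (Fin r → ℝ) →ₗ[ℝ] (Fin n → ℝ)) (Y : (Fin n → ℝ) →ₗ[ℝ] (Fin m → ℝ))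
    (part : Fin r → Fin p)
    (R : Fin p → ((Fin r → ℝ) →ₗ[ℝ] (Fin r → ℝ)))
    (hR : ∀ i v j, R i v j = if part j = i then v j else 0)
    (hincid : (Module.finrank ℝ (LinearMap.range Ia) : ℤ)
      = ∑ i : Fin p, (Module.finrank ℝ (LinearMap.range (Ia ∘ₗ R i)) : ℤ)) :
    ((Module.finrank ℝ (LinearMap.range Ia) : ℤ)
        - (Module.finrank ℝ (LinearMap.range (Y ∘ₗ Ia)) : ℤ))
      ≥ ∑ i : Fin p, ((Module.finrank ℝ (LinearMap.range (Ia ∘ₗ R i)) : ℤ)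
        - (Module.finrank ℝ (LinearMap.range ((Y ∘ₗ Ia) ∘ₗ R i)) : ℤ)) := by
  have hsum : (∑ i : Fin p, R i) = LinearMap.id := by
    refine LinearMap.ext fun v => funext fun j => ?_
    simp only [LinearMap.coe_sum, Finset.sum_apply, LinearMap.id_coe, id_eq]
    rw [Finset.sum_congr rfl (fun i _ => hR i v j), Finset.sum_ite_eq]
    simp only [Finset.mem_univ, if_true]
  have hYIa : (Y ∘ₗ Ia) = ∑ i : Fin p, (Y ∘ₗ Ia) ∘ₗ R i := by
    refine LinearMap.ext fun v => ?_
    simp only [LinearMap.comp_apply, LinearMap.coe_sum, Finset.sum_apply]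
    rw [← map_sum Y, ← map_sum Ia, ← LinearMap.sum_apply, hsum]
    rfl
  have hkey : Module.finrank ℝ (LinearMap.range (Y ∘ₗ Ia))
      ≤ ∑ i : Fin p, Module.finrank ℝ (LinearMap.range ((Y ∘ₗ Ia) ∘ₗ R i)) := by
    have h := finrank_range_sum_le Finset.univ (fun i => (Y ∘ₗ Ia) ∘ₗ R i)
    rwa [← hYIa] at h
  have hkey' : (Module.finrank ℝ (LinearMap.range (Y ∘ₗ Ia)) : ℤ)
      ≤ ∑ i : Fin p, (Module.finrank ℝ (LinearMap.range ((Y ∘ₗ Ia) ∘ₗ R i)) : ℤ) := by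
    exact_mod_cast hkey
  rw [Finset.sum_sub_distrib]
  omega
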